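/- arXiv:2201.00286 — 3 statements merged into one kernel-verified Lean document; each statement's English description precedes it below -/
import Mathlib

section
/- The supremal controllable sublanguage K↑ of K, defined as the union of all controllable sublanguages of K, is itself a controllable sublanguage of K, and it contains every controllable sublanguage of K. -/
def cl {α : Type*} (L : Set (List α)) : Set (List α) := {u | ∃ v, u ++ v ∈ L}

def catU {α : Type*} (M : Set (List α)) (Su : Set α) : Set (List α) :=
  {w | ∃ u ∈ M, ∃ a ∈ Su, w = u ++ [a]}

/-- `K` is controllable w.r.t. plant `L` and uncontrollable actions `Su`. -/
def Controllable {α : Type*} (Su : Set α) (L K : Set (List α)) : Prop :=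
  catU (cl K) Su ∩ L ⊆ cl K

/-- The supremal controllable sublanguage of `K`. -/
def supC {α : Type*} (Su : Set α) (L K : Set (List α)) : Set (List α) :=
  ⋃₀ {K' | K' ⊆ K ∧ Controllable Su L K'}

lemma cl_mono {α : Type*} {A B : Set (List α)} (h : A ⊆ B) : cl A ⊆ cl B := by
  rintro u ⟨v, hv⟩; exact ⟨v, h hv⟩

/-- `K↑` is a controllable sublanguage of `K` containing every controllable
sublanguage of `K`. -/
theorem supC_spec {α : Type*} (Su : Set α) (L K : Set (List α)) (hL : cl L = L) :
    supC Su L K ⊆ K ∧ Controllable Su L (supC Su L K) ∧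
      ∀ K', K' ⊆ K → Controllable Su L K' → K' ⊆ supC Su L K := by
  refine ⟨?_, ?_, ?_⟩
  · rintro w ⟨K', ⟨hK', _⟩, hw⟩
    exact hK' hw
  · rintro w ⟨⟨u, hu, a, ha, rfl⟩, hwL⟩
    obtain ⟨v, huv⟩ := hu
    obtain ⟨K', hK', huvK'⟩ := huv
    obtain ⟨hsub, hctrl⟩ := hK'
    have h1 : u ++ [a] ∈ cl K' :=
      hctrl ⟨⟨u, ⟨v, huvK'⟩, a, ha, rfl⟩, hwL⟩
    have h2 : K' ⊆ supC Su L K := fun x hx => ⟨K', ⟨hsub, hctrl⟩, hx⟩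
    exact cl_mono h2 h1
  · intro K' hsub hctrl w hw
    exact Set.mem_sUnion.mpr ⟨K', ⟨hsub, hctrl⟩, hw⟩
end

section
/- Existence direction of the controllability theorem: if K ⊆ L(M) is nonempty and satisfies cl(K)·Σ_u ∩ L(M) ⊆ cl(K), then the supervisor S defined by S(w) = { σ ∈ Σ : wσ ∈ cl(K) } ∪ Σ_u achieves L(S/M) = cl(K), where L(S/M) is defined inductively by: ε ∈ L(S/M), and wσ ∈ L(S/M) iff w ∈ L(S/M), wσ ∈ L(M), and σ ∈ S(w). -/
/-- The closed-loop language `L(S/M)` of supervisor `S` controlling a plant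
with generated language `LM`, defined inductively. -/
inductive ClosedLoop {α : Type*} (LM : Set (List α)) (S : List α → Set α) :
    List α → Prop
  | nil : ClosedLoop LM S []
  | snoc {w : List α} {a : α} : ClosedLoop LM S w → (w ++ [a]) ∈ LM →
      a ∈ S w → ClosedLoop LM S (w ++ [a])

/-- Existence direction of the controllability theorem: the canonical
supervisor achieves `L(S/M) = cl K`. -/
theorem controllability_existence {α : Type*} (Su : Set α)
    (LM K : Set (List α)) (hLM : cl LM = LM) (hKL : K ⊆ LM)
    (hne : K.Nonempty) (hctrl : catU (cl K) Su ∩ LM ⊆ cl K) :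
    {w | ClosedLoop LM (fun w => {a | w ++ [a] ∈ cl K} ∪ Su) w} = cl K := by
  have hclKL : cl K ⊆ LM := by
    rintro w ⟨v, hv⟩
    rw [← hLM]; exact ⟨v, hKL hv⟩
  ext w
  simp only [Set.mem_setOf_eq]
  constructor
  · intro h
    induction h with
    | nil => obtain ⟨k, hk⟩ := hne; exact ⟨k, hk⟩
    | snoc hw hLMw hS ih =>
      rcases hS with hS | hS
      · exact hS
      · exact hctrl ⟨⟨_, ih, _, hS, rfl⟩, hLMw⟩
  · intro h
    induction w using List.reverseRecOn with
    | nil => exact ClosedLoop.nil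
    | append_singleton w a ih =>
      have hw : w ∈ cl K := by
        obtain ⟨v, hv⟩ := h
        exact ⟨[a] ++ v, by simpa using hv⟩
      exact ClosedLoop.snoc (ih hw) (hclKL h) (Or.inl h)
end

section
/- Necessity direction of the controllability theorem: if a supervisor S (which always enables all uncontrollable actions) achieves L(S/M) = cl(K) for some K ⊆ Σ*, then cl(K)·Σ_u ∩ L(M) ⊆ cl(K). -/
/-- Necessity direction of the controllability theorem: if some supervisor
(always enabling uncontrollable actions) achieves `cl K`, then `K` is
controllable. -/
theorem controllability_necessity {α : Type*} (Su : Set α)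
    (LM K : Set (List α)) (S : List α → Set α) (hLM : cl LM = LM)
    (hS : ∀ w, Su ⊆ S w)
    (h : {w | ClosedLoop LM S w} = cl K) :
    catU (cl K) Su ∩ LM ⊆ cl K := by
  rintro w ⟨⟨u, hu, a, ha, rfl⟩, hwLM⟩
  have hcl : ClosedLoop LM S u := by rw [← h] at hu; exact hu
  have : ClosedLoop LM S (u ++ [a]) := ClosedLoop.snoc hcl hwLM (hS u ha)
  rw [← h]; exact this
end
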